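/- Let (σ_k)_{k ∈ Fin n} be a maximal CDP family and (A^k)_{k ∈ Fin n} arbitrary matrices in Matrix (Fin n) (Fin n) ℂ, and let ρ[𝒜,Σ] = Σ_k ρ[A^k,σ_k]. Then trace(ρ[𝒜,Σ]ᴴ * ρ[𝒜,Σ]) = Σ_k trace((A^k)ᴴ * A^k); equivalently, the squared Frobenius norm of ρ[𝒜,Σ] equals the sum of the squared Frobenius norms of the matrices A^k, independently of the CDP family. -/
import Mathlib

open Matrix

/-- The CDP matrix of `A` and a permutation `σ`. -/
def cdpMatrix {n : ℕ} (A : Matrix (Fin n) (Fin n) ℂ) (σ : Equiv.Perm (Fin n)) :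
    Matrix (Fin n × Fin n) (Fin n × Fin n) ℂ :=
  Matrix.of fun x y => if x.2 = σ x.1 ∧ y.2 = σ y.1 then A x.1 y.1 else 0

lemma trace_cdp_cross {n : ℕ} (A B : Matrix (Fin n) (Fin n) ℂ) (σ τ : Equiv.Perm (Fin n))
    (h : ∀ i, σ i ≠ τ i) :
    Matrix.trace ((cdpMatrix A σ)ᴴ * cdpMatrix B τ) = 0 := by
  simp only [Matrix.trace, Matrix.diag, Matrix.mul_apply, Matrix.conjTranspose_apply,
    cdpMatrix, Matrix.of_apply]
  refine Finset.sum_eq_zero fun x _ => Finset.sum_eq_zero fun y _ => ?_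
  by_cases h1 : y.2 = σ y.1
  · have h2 : ¬ y.2 = τ y.1 := fun h2 => h y.1 (h1 ▸ h2)
    rw [if_neg (show ¬(y.2 = τ y.1 ∧ x.2 = τ x.1) from fun hc => h2 hc.1), mul_zero]
  · rw [if_neg (show ¬(y.2 = σ y.1 ∧ x.2 = σ x.1) from fun hc => h1 hc.1), star_zero, zero_mul]

lemma trace_cdp_self {n : ℕ} (A : Matrix (Fin n) (Fin n) ℂ) (σ : Equiv.Perm (Fin n)) :
    Matrix.trace ((cdpMatrix A σ)ᴴ * cdpMatrix A σ) = Matrix.trace (Aᴴ * A) := by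
  simp only [Matrix.trace, Matrix.diag, Matrix.mul_apply, Matrix.conjTranspose_apply,
    cdpMatrix, Matrix.of_apply]
  have key : ∀ (y x : Fin n × Fin n),
      star (if y.2 = σ y.1 ∧ x.2 = σ x.1 then A y.1 x.1 else 0) *
        (if y.2 = σ y.1 ∧ x.2 = σ x.1 then A y.1 x.1 else 0)
      = if y.2 = σ y.1 then (if x.2 = σ x.1 then star (A y.1 x.1) * A y.1 x.1 else 0)
        else 0 := by
    intro y x
    by_cases h1 : y.2 = σ y.1 <;> by_cases h2 : x.2 = σ x.1 <;> simp [h1, h2]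
  simp only [key]
  rw [Fintype.sum_prod_type]
  simp [Fintype.sum_prod_type]

theorem cdpMatrix_frobenius {n : ℕ} [NeZero n] (σ : Fin n → Equiv.Perm (Fin n))
    (hcdp : ∀ i j, i ≠ j → ∀ k, σ i k ≠ σ j k)
    (hnorm : ∀ i, σ i 0 = i)
    (A : Fin n → Matrix (Fin n) (Fin n) ℂ) :
    Matrix.trace ((∑ k, cdpMatrix (A k) (σ k))ᴴ * (∑ k, cdpMatrix (A k) (σ k))) =
      ∑ k, Matrix.trace ((A k)ᴴ * A k) := by
  rw [Matrix.conjTranspose_sum, Finset.sum_mul]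
  simp only [Matrix.mul_sum, Matrix.trace_sum]
  refine Finset.sum_congr rfl fun k _ => ?_
  rw [Finset.sum_eq_single k]
  · exact trace_cdp_self _ _
  · intro l _ hl
    exact trace_cdp_cross _ _ _ _ (fun i => hcdp k l (Ne.symm hl) i)
  · intro h; exact absurd (Finset.mem_univ k) h
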